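/- Let (φ,ξ,η) be an almost paracontact almost paracomplex Riemannian structure on a real inner product space (V,g) of dimension 2n+1. Then the associated metric g̃ is a nondegenerate symmetric bilinear form of signature (n+1, n): there exists a basis u₀, u₁, …, u_{2n} of V such that g̃(u_i,u_j) = 0 for i ≠ j, g̃(u_i,u_i) = 1 for 0 ≤ i ≤ n, and g̃(u_i,u_i) = −1 for n+1 ≤ i ≤ 2n. -/

import Mathlib

set_option maxHeartbeats 1000000


open RealInnerProductSpace

/-- The associated metric `g̃(x,y) = g(x, φ y) + η(x) η(y)` is a
nondegenerate symmetric bilinear form of signature `(n+1, n)`: there is a basis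
`u₀, …, u_{2n}` of `V` that is `g̃`-orthogonal, with `g̃(uᵢ,uᵢ) = 1` for
`0 ≤ i ≤ n` and `g̃(uᵢ,uᵢ) = −1` for `n+1 ≤ i ≤ 2n`. -/
theorem associated_metric_signature
    {n : ℕ} (hn : 0 < n) {V : Type*} [NormedAddCommGroup V]
    [InnerProductSpace ℝ V] [FiniteDimensional ℝ V]
    (hdim : Module.finrank ℝ V = 2 * n + 1)
    (φ : V →ₗ[ℝ] V) (ξ : V) (η : V →ₗ[ℝ] ℝ)
    (hφξ : φ ξ = 0)
    (hφφ : ∀ x : V, φ (φ x) = x - η x • ξ)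
    (hηφ : ∀ x : V, η (φ x) = 0)
    (hηξ : η ξ = 1)
    (htr : LinearMap.trace ℝ V φ = 0)
    (hgφ : ∀ x y : V, ⟪φ x, φ y⟫ = ⟪x, y⟫ - η x * η y)
    (hgξ : ∀ x : V, ⟪x, ξ⟫ = η x)
    (gt : V → V → ℝ)
    (hgt : ∀ x y : V, gt x y = ⟪x, φ y⟫ + η x * η y) :
    ∃ u : Module.Basis (Fin (2 * n + 1)) ℝ V,
      (∀ i j : Fin (2 * n + 1), i ≠ j → gt (u i) (u j) = 0) ∧
      (∀ i : Fin (2 * n + 1), (i : ℕ) ≤ n → gt (u i) (u i) = 1) ∧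
      (∀ i : Fin (2 * n + 1), n + 1 ≤ (i : ℕ) → gt (u i) (u i) = -1) := by
  classical
  have hξ0 : ξ ≠ 0 := by
    intro h; rw [h, map_zero] at hηξ; norm_num at hηξ
  -- the three eigenspaces of φ
  set S : Fin 3 → Submodule ℝ V := fun i => Module.End.eigenspace φ (![0, 1, -1] i) with hSdef
  have hmem0 : ∀ x : V, x ∈ S 0 ↔ φ x = 0 := by
    intro x
    rw [hSdef]
    rw [Module.End.mem_eigenspace_iff]
    simp
  have hmem1 : ∀ x : V, x ∈ S 1 ↔ φ x = x := by
    intro x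
    rw [hSdef]
    rw [Module.End.mem_eigenspace_iff]
    simp
  have hmem2 : ∀ x : V, x ∈ S 2 ↔ φ x = -x := by
    intro x
    rw [hSdef]
    rw [Module.End.mem_eigenspace_iff]
    simp
  have hcinj : Function.Injective ![(0:ℝ), 1, -1] := by
    intro i j h
    fin_cases i <;> fin_cases j <;>
      first
        | rfl
        | (exfalso
           simp only [Matrix.cons_val_zero, Matrix.cons_val_one, Matrix.head_cons,
             Matrix.cons_val_two, Matrix.tail_cons, Matrix.head_fin_const] at h
           norm_num at h)
  have hind : iSupIndep S := (Module.End.eigenspaces_iSupIndep φ).comp hcinj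
  have hsup : (⨆ i, S i) = ⊤ := by
    rw [eq_top_iff]
    intro x _
    have h0 : η x • ξ ∈ S 0 := (hmem0 _).2 (by rw [map_smul, hφξ, smul_zero])
    have e1 : φ (x - η x • ξ + φ x) = x - η x • ξ + φ x := by
      simp only [map_add, map_sub, map_smul, hφξ, smul_zero, hφφ]
      abel
    have e2 : φ (x - η x • ξ - φ x) = -(x - η x • ξ - φ x) := by
      simp only [map_sub, map_smul, hφξ, smul_zero, hφφ]
      abel
    have h1 : (1/2 : ℝ) • (x - η x • ξ + φ x) ∈ S 1 :=
      (hmem1 _).2 (by rw [map_smul, e1])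
    have h2 : (1/2 : ℝ) • (x - η x • ξ - φ x) ∈ S 2 :=
      (hmem2 _).2 (by rw [map_smul, e2, smul_neg])
    have hx : x = η x • ξ + ((1/2 : ℝ) • (x - η x • ξ + φ x) + (1/2 : ℝ) • (x - η x • ξ - φ x)) := by
      module
    rw [hx]
    exact add_mem (Submodule.mem_iSup_of_mem 0 h0)
      (add_mem (Submodule.mem_iSup_of_mem 1 h1) (Submodule.mem_iSup_of_mem 2 h2))
  have hInt : DirectSum.IsInternal S :=
    DirectSum.isInternal_submodule_of_iSupIndep_of_iSup_eq_top hind hsup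
  have hmap : ∀ i, Set.MapsTo φ (S i) (S i) := by
    intro i x hx
    fin_cases i
    · have h := (hmem0 x).1 hx
      exact (hmem0 (φ x)).2 (by rw [h, map_zero])
    · have h := (hmem1 x).1 hx
      exact (hmem1 (φ x)).2 (by simp only [h])
    · have h := (hmem2 x).1 hx
      exact (hmem2 (φ x)).2 (by simp [h])
  have hmapid : ∀ i, Set.MapsTo (LinearMap.id : V →ₗ[ℝ] V) (S i) (S i) := fun i x hx => hx
  -- restrictions of φ
  have hres0 : φ.restrict (hmap 0) = 0 := by
    ext x
    have : φ (x : V) = 0 := (hmem0 x).1 x.2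
    exact this
  have hres1 : φ.restrict (hmap 1) = LinearMap.id := by
    ext x
    have : φ (x : V) = x := (hmem1 x).1 x.2
    exact this
  have hres2 : φ.restrict (hmap 2) = -LinearMap.id := by
    ext x
    have : φ (x : V) = -(x : V) := (hmem2 x).1 x.2
    exact this
  have hresid : ∀ i, (LinearMap.id : V →ₗ[ℝ] V).restrict (hmapid i) = LinearMap.id := by
    intro i; ext x; rfl
  -- S 0 is the span of ξ
  have hker : S 0 = Submodule.span ℝ {ξ} := by
    apply le_antisymm
    · intro x hx
      have h1 : φ x = 0 := (hmem0 x).1 hx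
      have h2 := hφφ x
      rw [h1, map_zero] at h2
      have h3 : x = η x • ξ := sub_eq_zero.mp h2.symm
      exact Submodule.mem_span_singleton.2 ⟨η x, h3.symm⟩
    · rw [Submodule.span_le, Set.singleton_subset_iff]
      exact (hmem0 ξ).2 hφξ
  have hr0 : Module.finrank ℝ (S 0) = 1 := by
    rw [hker]; exact finrank_span_singleton hξ0
  -- trace computations
  have htr1 := LinearMap.trace_eq_sum_trace_restrict hInt hmap (f := φ)
  have htr2 := LinearMap.trace_eq_sum_trace_restrict hInt hmapid (f := LinearMap.id)
  rw [Fin.sum_univ_three, hres0, hres1, hres2, htr, map_zero, map_neg,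
    LinearMap.trace_id, LinearMap.trace_id] at htr1
  rw [Fin.sum_univ_three, hresid 0, hresid 1, hresid 2, LinearMap.trace_id,
    LinearMap.trace_id, LinearMap.trace_id, LinearMap.trace_id, hdim, hr0] at htr2
  have hpq : Module.finrank ℝ (S 1) = Module.finrank ℝ (S 2) := by
    have : (Module.finrank ℝ (S 1) : ℝ) = (Module.finrank ℝ (S 2) : ℝ) := by linarith
    exact_mod_cast this
  have hsum2n : Module.finrank ℝ (S 1) + Module.finrank ℝ (S 2) = 2 * n := by
    have : ((2 * n + 1 : ℕ) : ℝ) = 1 + ((Module.finrank ℝ (S 1) : ℝ) + (Module.finrank ℝ (S 2) : ℝ)) := by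
      push_cast at htr2 ⊢
      linarith
    have h' : (2 * n + 1 : ℕ) = 1 + (Module.finrank ℝ (S 1) + Module.finrank ℝ (S 2)) := by
      exact_mod_cast this
    omega
  have hp : Module.finrank ℝ (S 1) = n := by omega
  have hq : Module.finrank ℝ (S 2) = n := by omega
  -- orthonormal bases of S 1 and S 2
  let bp : OrthonormalBasis (Fin n) ℝ (S 1) :=
    (stdOrthonormalBasis ℝ (S 1)).reindex (finCongr hp)
  let bm : OrthonormalBasis (Fin n) ℝ (S 2) :=
    (stdOrthonormalBasis ℝ (S 2)).reindex (finCongr hq)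
  have hbp : ∀ a b : Fin n, ⟪(bp a : V), (bp b : V)⟫ = if a = b then 1 else 0 := by
    intro a b
    rw [← Submodule.coe_inner]
    exact orthonormal_iff_ite.mp bp.orthonormal a b
  have hbm : ∀ a b : Fin n, ⟪(bm a : V), (bm b : V)⟫ = if a = b then 1 else 0 := by
    intro a b
    rw [← Submodule.coe_inner]
    exact orthonormal_iff_ite.mp bm.orthonormal a b
  -- gt values
  have hη1 : ∀ x : V, x ∈ S 1 → η x = 0 := by
    intro x hx
    have h := hηφ x
    rw [(hmem1 x).1 hx] at h
    exact h
  have hη2 : ∀ x : V, x ∈ S 2 → η x = 0 := by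
    intro x hx
    have h := hηφ x
    rw [(hmem2 x).1 hx, map_neg, neg_eq_zero] at h
    exact h
  have hgt11 : ∀ x y : V, x ∈ S 1 → y ∈ S 1 → gt x y = ⟪x, y⟫ := by
    intro x y hx hy
    rw [hgt, (hmem1 y).1 hy, hη1 x hx]
    ring
  have hgt22 : ∀ x y : V, x ∈ S 2 → y ∈ S 2 → gt x y = -⟪x, y⟫ := by
    intro x y hx hy
    rw [hgt, (hmem2 y).1 hy, hη2 x hx, inner_neg_right]
    ring
  have hperp12 : ∀ x y : V, x ∈ S 1 → y ∈ S 2 → ⟪x, y⟫ = 0 := by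
    intro x y hx hy
    have h := hgφ x y
    rw [(hmem1 x).1 hx, (hmem2 y).1 hy, inner_neg_right, hη1 x hx] at h
    linarith
  have hgt12 : ∀ x y : V, x ∈ S 1 → y ∈ S 2 → gt x y = 0 := by
    intro x y hx hy
    rw [hgt, (hmem2 y).1 hy, inner_neg_right, hperp12 x y hx hy, hη1 x hx]
    ring
  have hgt21 : ∀ x y : V, x ∈ S 2 → y ∈ S 1 → gt x y = 0 := by
    intro x y hx hy
    rw [hgt, (hmem1 y).1 hy, hη2 x hx, real_inner_comm, hperp12 y x hy hx]
    ring
  have hgtξξ : gt ξ ξ = 1 := by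
    rw [hgt, hφξ, inner_zero_right, hηξ]
    ring
  have hgtξ1 : ∀ x : V, x ∈ S 1 → gt ξ x = 0 ∧ gt x ξ = 0 := by
    intro x hx
    constructor
    · rw [hgt, (hmem1 x).1 hx, real_inner_comm, hgξ x, hη1 x hx]
      ring
    · rw [hgt, hφξ, inner_zero_right, hη1 x hx]
      ring
  have hgtξ2 : ∀ x : V, x ∈ S 2 → gt ξ x = 0 ∧ gt x ξ = 0 := by
    intro x hx
    constructor
    · rw [hgt, (hmem2 x).1 hx, inner_neg_right, real_inner_comm, hgξ x, hη2 x hx]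
      ring
    · rw [hgt, hφξ, inner_zero_right, hη2 x hx]
      ring
  -- the candidate basis family
  let u : Fin (2 * n + 1) → V := fun i =>
    if h1 : (i : ℕ) = 0 then ξ
    else if h2 : (i : ℕ) ≤ n then (bp ⟨(i : ℕ) - 1, by omega⟩ : V)
    else (bm ⟨(i : ℕ) - (n + 1), by have := i.isLt; omega⟩ : V)
  have hu : ∀ i : Fin (2 * n + 1), u i =
    if h1 : (i : ℕ) = 0 then ξ
    else if h2 : (i : ℕ) ≤ n then (bp ⟨(i : ℕ) - 1, by omega⟩ : V)
    else (bm ⟨(i : ℕ) - (n + 1), by have := i.isLt; omega⟩ : V) := fun i => rfl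
  have hcase : ∀ i : Fin (2 * n + 1),
      ((i : ℕ) = 0 ∧ u i = ξ)
      ∨ (1 ≤ (i : ℕ) ∧ (i : ℕ) ≤ n ∧ ∃ h : (i : ℕ) - 1 < n, u i = (bp ⟨(i : ℕ) - 1, h⟩ : V))
      ∨ (n + 1 ≤ (i : ℕ) ∧ ∃ h : (i : ℕ) - (n + 1) < n, u i = (bm ⟨(i : ℕ) - (n + 1), h⟩ : V)) := by
    intro i
    by_cases h1 : (i : ℕ) = 0
    · left; exact ⟨h1, by rw [hu i, dif_pos h1]⟩
    · by_cases h2 : (i : ℕ) ≤ n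
      · right; left
        exact ⟨by omega, h2, by omega, by rw [hu i, dif_neg h1, dif_pos h2]⟩
      · right; right
        exact ⟨by omega, by have := i.isLt; omega, by rw [hu i, dif_neg h1, dif_neg h2]⟩
  have horth : ∀ i j : Fin (2 * n + 1), i ≠ j → gt (u i) (u j) = 0 := by
    intro i j hij
    have hij' : (i : ℕ) ≠ (j : ℕ) := fun h => hij (Fin.ext h)
    rcases hcase i with ⟨hi0, hiu⟩ | ⟨hi1, hi2, hi3, hiu⟩ | ⟨hi1, hi3, hiu⟩ <;>
      rcases hcase j with ⟨hj0, hju⟩ | ⟨hj1, hj2, hj3, hju⟩ | ⟨hj1, hj3, hju⟩ <;>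
      rw [hiu, hju]
    · exact absurd (hi0.trans hj0.symm) hij'
    · exact (hgtξ1 _ (bp _).2).1
    · exact (hgtξ2 _ (bm _).2).1
    · exact (hgtξ1 _ (bp _).2).2
    · rw [hgt11 _ _ (bp _).2 (bp _).2, hbp, if_neg]
      intro h
      rw [Fin.mk.injEq] at h
      omega
    · exact hgt12 _ _ (bp _).2 (bm _).2
    · exact (hgtξ2 _ (bm _).2).2
    · exact hgt21 _ _ (bm _).2 (bp _).2
    · rw [hgt22 _ _ (bm _).2 (bm _).2, hbm, if_neg, neg_zero]
      intro h
      rw [Fin.mk.injEq] at h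
      omega
  have hdiag : ∀ i : Fin (2 * n + 1), gt (u i) (u i) = if (i : ℕ) ≤ n then 1 else -1 := by
    intro i
    rcases hcase i with ⟨hi0, hiu⟩ | ⟨hi1, hi2, hi3, hiu⟩ | ⟨hi1, hi3, hiu⟩
    · rw [hiu, if_pos (by omega), hgtξξ]
    · rw [hiu, if_pos hi2, hgt11 _ _ (bp _).2 (bp _).2, hbp, if_pos rfl]
    · rw [hiu, if_neg (by omega), hgt22 _ _ (bm _).2 (bm _).2, hbm, if_pos rfl]
  have hdne : ∀ i : Fin (2 * n + 1), gt (u i) (u i) ≠ 0 := by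
    intro i
    rw [hdiag i]
    split <;> norm_num
  -- linear independence via gt-orthogonality
  have hli : LinearIndependent ℝ u := by
    rw [linearIndependent_iff']
    intro s g hsum j hj
    let F : V →ₗ[ℝ] ℝ :=
      ((innerSL ℝ (φ (u j)) : V →L[ℝ] ℝ) : V →ₗ[ℝ] ℝ) + (η (u j)) • η
    have hF : ∀ x : V, F x = gt x (u j) := by
      intro x
      simp only [F, LinearMap.add_apply, ContinuousLinearMap.coe_coe, innerSL_apply_apply,
        LinearMap.smul_apply, smul_eq_mul, hgt]
      rw [real_inner_comm]
      ring
    have h0 : F (∑ i ∈ s, g i • u i) = g j * gt (u j) (u j) := by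
      rw [map_sum, Finset.sum_eq_single j]
      · rw [map_smul, hF, smul_eq_mul]
      · intro b hb hbj
        rw [map_smul, hF, horth b j hbj, smul_eq_mul, mul_zero]
      · intro h; exact absurd hj h
    rw [hsum, map_zero] at h0
    exact (mul_eq_zero.mp h0.symm).resolve_right (hdne j)
  have hcard : Fintype.card (Fin (2 * n + 1)) = Module.finrank ℝ V := by
    simp [hdim]
  refine ⟨basisOfLinearIndependentOfCardEqFinrank hli hcard, ?_, ?_, ?_⟩ <;>
    simp only [coe_basisOfLinearIndependentOfCardEqFinrank]
  · exact horth
  · intro i hi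
    rw [hdiag i, if_pos hi]
  · intro i hi
    rw [hdiag i, if_neg (by omega)]
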